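/- arXiv:2210.11570 — 11 statements merged into one kernel-verified Lean document; each statement's English description precedes it below -/
import Mathlib

section
/- Let b be a real number with 0 < b < 1 and let y : [b, 1] → ℝ be a monotone nonincreasing function with y(b) = 1 and y(1) = 0 that satisfies the invariance equation y(w) = y(w/w') + 1 − y(b/w') for all real numbers w, w' with b ≤ w ≤ w' ≤ 1. Then y(w) = log w / log b for every w ∈ [b, 1]. -/
/-- Proposition 3.2(i): a nonincreasing quantile function on `[b,1]` with `y b = 1`,
`y 1 = 0` satisfying the scale-invariance/greedy-buyback invariance equation must be
the canonical quantile function `w ↦ log w / log b`. -/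
theorem stmt_0 (b : ℝ) (hb0 : 0 < b) (hb1 : b < 1) (y : ℝ → ℝ)
    (hmono : ∀ w w' : ℝ, b ≤ w → w ≤ w' → w' ≤ 1 → y w' ≤ y w)
    (hyb : y b = 1) (hy1 : y 1 = 0)
    (hinv : ∀ w w' : ℝ, b ≤ w → w ≤ w' → w' ≤ 1 →
      y w = y (w / w') + 1 - y (b / w')) :
    ∀ w : ℝ, b ≤ w → w ≤ 1 → y w = Real.log w / Real.log b := by
  -- Step 1: y(b/w') = 1 - y(w')
  have hrefl : ∀ w' : ℝ, b ≤ w' → w' ≤ 1 → y (b / w') = 1 - y w' := by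
    intro w' h1 h2
    have hw0 : w' ≠ 0 := ne_of_gt (lt_of_lt_of_le hb0 h1)
    have := hinv w' w' h1 le_rfl h2
    rw [div_self hw0, hy1] at this
    linarith
  -- Step 2: additivity
  have hadd : ∀ w w' : ℝ, b ≤ w → w ≤ w' → w' ≤ 1 → y w = y (w / w') + y w' := by
    intro w w' h1 h2 h3
    have h4 := hinv w w' h1 h2 h3
    rw [hrefl w' (le_trans h1 h2) h3] at h4
    linarith
  -- g u = y (b ^ u)
  set g : ℝ → ℝ := fun u => y (b ^ u) with hgdef
  have hmem : ∀ u : ℝ, 0 ≤ u → u ≤ 1 → b ≤ b ^ u ∧ b ^ u ≤ 1 := by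
    intro u h0 h1
    constructor
    · have := Real.rpow_le_rpow_of_exponent_ge hb0 hb1.le h1
      rwa [Real.rpow_one] at this
    · exact Real.rpow_le_one hb0.le hb1.le h0
  have gadd : ∀ u v : ℝ, 0 ≤ u → 0 ≤ v → u + v ≤ 1 → g (u + v) = g u + g v := by
    intro u v hu hv huv
    have hbu : b ^ u ≤ 1 := Real.rpow_le_one hb0.le hb1.le hu
    have hbv0 : (0:ℝ) < b ^ v := Real.rpow_pos_of_pos hb0 v
    have hbv1 : b ^ v ≤ 1 := Real.rpow_le_one hb0.le hb1.le hv
    have hsplit : b ^ (u + v) = b ^ u * b ^ v := Real.rpow_add hb0 u v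
    have h1 : b ≤ b ^ (u + v) := (hmem (u+v) (by linarith) huv).1
    have h2 : b ^ (u + v) ≤ b ^ v := by
      rw [hsplit]; nlinarith
    have h := hadd (b ^ (u+v)) (b ^ v) h1 h2 hbv1
    rw [hsplit, mul_div_cancel_right₀ _ (ne_of_gt hbv0)] at h
    show y (b ^ (u + v)) = y (b ^ u) + y (b ^ v)
    rw [hsplit]; exact h
  have gmono : ∀ u v : ℝ, 0 ≤ u → u ≤ v → v ≤ 1 → g u ≤ g v := by
    intro u v h0 huv h1
    have h1' : b ≤ b ^ v := (hmem v (le_trans h0 huv) h1).1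
    have h2' : b ^ v ≤ b ^ u := Real.rpow_le_rpow_of_exponent_ge hb0 hb1.le huv
    have h3' : b ^ u ≤ 1 := (hmem u h0 (le_trans huv h1)).2
    exact hmono _ _ h1' h2' h3'
  have g0 : g 0 = 0 := by simp only [hgdef, Real.rpow_zero]; exact hy1
  have g1 : g 1 = 1 := by simp only [hgdef, Real.rpow_one]; exact hyb
  -- g (k/n) = k * g(1/n) for k ≤ n
  have gnat : ∀ n : ℕ, 0 < n → ∀ k : ℕ, k ≤ n → g ((k : ℝ) / n) = (k : ℝ) * g (1 / n) := by
    intro n hn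
    have hn' : (0:ℝ) < n := by exact_mod_cast hn
    intro k
    induction k with
    | zero => intro _; simpa using g0
    | succ k ih =>
      intro hk
      have hk' : k ≤ n := le_of_lt (Nat.lt_of_succ_le hk)
      have hkn : (k : ℝ) ≤ n := by exact_mod_cast hk'
      have hkn1 : ((k:ℝ) + 1) ≤ n := by exact_mod_cast hk
      have e1 : ((k:ℝ) + 1) / n = (k:ℝ)/n + 1/n := by ring
      have h := gadd ((k:ℝ)/n) (1/n) (by positivity) (by positivity)
        (by rw [← e1]; exact div_le_one_of_le₀ hkn1 hn'.le)
      rw [← e1] at h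
      push_cast
      rw [h, ih hk']; ring
  have gfrac : ∀ n : ℕ, 0 < n → ∀ k : ℕ, k ≤ n → g ((k : ℝ) / n) = (k : ℝ) / n := by
    intro n hn k hk
    have hn' : (0:ℝ) < n := by exact_mod_cast hn
    have h1 := gnat n hn n le_rfl
    rw [div_self (ne_of_gt hn'), g1] at h1
    have hginv : g (1 / n) = 1 / n := by
      field_simp
      nlinarith [h1]
    rw [gnat n hn k hk, hginv]; ring
  -- g u = u on [0,1]
  have gid : ∀ u : ℝ, 0 ≤ u → u ≤ 1 → g u = u := by
    intro u h0 h1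
    rcases eq_or_lt_of_le h1 with h1e | h1l
    · rw [h1e, g1]
    · have key : ∀ n : ℕ, 0 < n → |g u - u| ≤ 1 / n := by
        intro n hn
        have hn' : (0:ℝ) < n := by exact_mod_cast hn
        set k := ⌊u * n⌋₊ with hk
        have hk1 : (k : ℝ) ≤ u * n := Nat.floor_le (by positivity)
        have hk2 : u * n < (k:ℝ) + 1 := Nat.lt_floor_add_one _
        have hkltn : k < n := by
          have : u * n < n := by nlinarith
          exact_mod_cast Nat.floor_lt (by positivity) |>.mpr (by exact_mod_cast this)
        have hlow : (k:ℝ)/n ≤ u := by rw [div_le_iff₀ hn']; linarith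
        have hhigh : u ≤ ((k:ℝ)+1)/n := by rw [le_div_iff₀ hn']; linarith
        have hk1n : ((k:ℝ)+1)/n ≤ 1 := by
          rw [div_le_one hn']; exact_mod_cast hkltn
        have e1 : ((k:ℝ)+1) = ((k+1 : ℕ) : ℝ) := by push_cast; ring
        have hgl : (k:ℝ)/n ≤ g u := by
          rw [← gfrac n hn k (le_of_lt hkltn)]
          exact gmono _ _ (by positivity) hlow h1l.le
        have hgh : g u ≤ ((k:ℝ)+1)/n := by
          have := gmono u (((k:ℝ)+1)/n) h0 hhigh hk1n
          rw [e1] at this ⊢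
          rwa [gfrac n hn (k+1) hkltn] at this
        rw [abs_le]
        constructor
        · have : (k:ℝ)/n ≥ u - 1/n := by rw [ge_iff_le, sub_le_iff_le_add, ← add_div, le_div_iff₀ hn']; linarith
          linarith
        · have hinv1 : (1/(n:ℝ))*n = 1 := one_div_mul_cancel (ne_of_gt hn')
          have : ((k:ℝ)+1)/n ≤ u + 1/n := by rw [div_le_iff₀ hn']; nlinarith [hk1, hinv1]
          linarith
      by_contra hne
      have habs : 0 < |g u - u| := abs_pos.mpr (sub_ne_zero.mpr hne)
      obtain ⟨n, hn⟩ := exists_nat_one_div_lt habs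
      have := key (n+1) (Nat.succ_pos n)
      push_cast at this hn
      linarith
  -- conclude
  intro w hbw hw1
  have hw0 : 0 < w := lt_of_lt_of_le hb0 hbw
  have hlogb : Real.log b < 0 := Real.log_neg hb0 hb1
  have hlogw : Real.log w ≤ 0 := Real.log_nonpos hw0.le hw1
  have hlogbw : Real.log b ≤ Real.log w := Real.log_le_log hb0 hbw
  set u := Real.log w / Real.log b with hu
  have hu0 : 0 ≤ u := by rw [hu, div_nonneg_iff]; right; exact ⟨hlogw, hlogb.le⟩
  have hu1 : u ≤ 1 := by
    rw [hu, div_le_one_iff]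
    right; right; exact ⟨hlogb, hlogbw⟩
  have hbu : b ^ u = w := by
    have : u = Real.logb b w := rfl
    rw [this]
    exact Real.rpow_logb hb0 (ne_of_lt hb1) hw0
  have := gid u hu0 hu1
  rw [hgdef] at this
  simp only at this
  rw [hbu] at this
  exact this
end

section
/- For every real number f ≥ 0 there exists a unique real number ŵ ≥ 1 satisfying ŵ = (1 + f)·(log ŵ + 1). Moreover, this solution ŵ satisfies ŵ ≥ e if and only if f ≥ (e − 2)/2. -/
open Real Set

noncomputable def gfun : ℝ → ℝ := fun w => w / (Real.log w + 1)

lemma gden_pos {w : ℝ} (hw : 1 ≤ w) : 0 < Real.log w + 1 := by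
  have : 0 ≤ Real.log w := Real.log_nonneg hw
  linarith

lemma gfun_contOn : ContinuousOn gfun (Set.Ici 1) := by
  apply ContinuousOn.div continuousOn_id
  · exact ((Real.continuousOn_log.mono (by intro x hx; simp at hx ⊢; intro h; simp [h] at hx; linarith)).add continuousOn_const)
  · intro x hx; exact (gden_pos hx).ne'

lemma gfun_hasDeriv {w : ℝ} (hw : 1 ≤ w) :
    HasDerivAt gfun ((1 * (Real.log w + 1) - w * w⁻¹) / (Real.log w + 1) ^ 2) w := by
  have hw0 : w ≠ 0 := by positivity
  exact (hasDerivAt_id w).div ((Real.hasDerivAt_log hw0).add_const 1) (gden_pos hw).ne'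

lemma gfun_strictMono : StrictMonoOn gfun (Set.Ici 1) := by
  apply strictMonoOn_of_deriv_pos (convex_Ici 1) gfun_contOn
  intro x hx
  rw [interior_Ici] at hx
  have hx1 : (1:ℝ) ≤ x := le_of_lt hx
  have hd := (gfun_hasDeriv hx1).deriv
  rw [hd]
  have hx0 : x ≠ 0 := by positivity
  have hlog : 0 < Real.log x := Real.log_pos hx
  have : 1 * (Real.log x + 1) - x * x⁻¹ = Real.log x := by
    field_simp
    ring
  rw [this]
  positivity

lemma gfun_eq_iff {w : ℝ} (hw : 1 ≤ w) (c : ℝ) :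
    gfun w = c ↔ w = c * (Real.log w + 1) := by
  rw [gfun, div_eq_iff (gden_pos hw).ne']

/-- For every `f ≥ 0` there is a unique `wh ≥ 1` with `wh = (1+f)(log wh + 1)`, and this
solution satisfies `wh ≥ e` iff `f ≥ (e-2)/2`. -/
theorem stmt_2 (f : ℝ) (hf : 0 ≤ f) :
    (∃! wh : ℝ, 1 ≤ wh ∧ wh = (1 + f) * (Real.log wh + 1)) ∧
    (∀ wh : ℝ, 1 ≤ wh → wh = (1 + f) * (Real.log wh + 1) →
      (Real.exp 1 ≤ wh ↔ (Real.exp 1 - 2) / 2 ≤ f)) := by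
  set c := 1 + f with hc
  have hc1 : 1 ≤ c := by linarith
  -- existence via IVT on [1, exp (2+4f)]
  have hW1 : (1:ℝ) ≤ Real.exp (2 + 4 * f) := by
    rw [show (1:ℝ) = Real.exp 0 by simp]
    exact Real.exp_le_exp.mpr (by linarith)
  have hgW : c ≤ gfun (Real.exp (2 + 4 * f)) := by
    have hx : (0:ℝ) ≤ 2 + 4 * f := by linarith
    have hsq : ((2 + 4 * f) / 2 + 1) ^ 2 ≤ Real.exp (2 + 4 * f) := by
      have h1 : (2 + 4 * f) / 2 + 1 ≤ Real.exp ((2 + 4 * f) / 2) :=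
        Real.add_one_le_exp _
      have h2 : (0:ℝ) ≤ (2 + 4 * f) / 2 + 1 := by linarith
      calc ((2 + 4 * f) / 2 + 1) ^ 2 ≤ Real.exp ((2 + 4 * f) / 2) ^ 2 := by
            exact pow_le_pow_left₀ h2 h1 2
        _ = Real.exp (2 + 4 * f) := by
            rw [← Real.exp_nat_mul]; ring_nf
    rw [gfun, Real.log_exp, le_div_iff₀ (by positivity)]
    nlinarith
  have hg1 : gfun 1 = 1 := by simp [gfun]
  obtain ⟨w, hwmem, hwval⟩ := intermediate_value_Icc hW1
    (gfun_contOn.mono (Set.Icc_subset_Ici_self)) (⟨by rw [hg1]; exact hc1, hgW⟩ : c ∈ Set.Icc (gfun 1) (gfun (Real.exp (2 + 4 * f))))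
  have hw1 : 1 ≤ w := hwmem.1
  have hweq : w = c * (Real.log w + 1) := (gfun_eq_iff hw1 c).mp hwval
  constructor
  · refine ⟨w, ⟨hw1, hweq⟩, ?_⟩
    rintro y ⟨hy1, hyeq⟩
    have hgy : gfun y = c := (gfun_eq_iff hy1 c).mpr hyeq
    exact gfun_strictMono.injOn hy1 hw1 (by rw [hgy, hwval])
  · intro wh hwh1 hwheq
    have hgwh : gfun wh = c := (gfun_eq_iff hwh1 c).mpr hwheq
    have he1 : (1:ℝ) ≤ Real.exp 1 := Real.one_le_exp (by norm_num)
    have hge : gfun (Real.exp 1) = Real.exp 1 / 2 := by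
      simp [gfun, Real.log_exp]; norm_num
    constructor
    · intro h
      have := gfun_strictMono.monotoneOn he1 hwh1 h
      rw [hge, hgwh] at this
      linarith
    · intro h
      by_contra hcon
      push_neg at hcon
      have := gfun_strictMono hwh1 he1 hcon
      rw [hge, hgwh] at this
      linarith
end

section
/- Let f ≥ 0 and let ŵ* be the unique real number ŵ ≥ 1 satisfying ŵ = (1 + f)·(log ŵ + 1). Then for every real w > 1 + f, (w · log w)/(w − (1 + f)) ≥ log ŵ* + 1. If moreover f > 0, equality holds if and only if w = ŵ*. -/
/-- Key pointwise inequality: `w log w ≥ (log s + 1) w - s` for `w, s > 0`. -/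
lemma key_ineq (s w : ℝ) (hs : 0 < s) (hw : 0 < w) :
    (Real.log s + 1) * w - s ≤ w * Real.log w := by
  have h := Real.log_le_sub_one_of_pos (div_pos hs hw)
  rw [Real.log_div (ne_of_gt hs) (ne_of_gt hw)] at h
  have h2 := mul_le_mul_of_nonneg_left h hw.le
  have hsw : w * (s / w - 1) = s - w := by field_simp
  nlinarith

lemma key_ineq_strict (s w : ℝ) (hs : 0 < s) (hw : 0 < w) (hne : w ≠ s) :
    (Real.log s + 1) * w - s < w * Real.log w := by
  have hx : s / w ≠ 1 := by
    intro h
    exact hne ((div_eq_one_iff_eq (ne_of_gt hw)).mp h).symm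
  have h := Real.log_lt_sub_one_of_pos (div_pos hs hw) hx
  rw [Real.log_div (ne_of_gt hs) (ne_of_gt hw)] at h
  have := mul_lt_mul_of_pos_left h hw
  have hsw : w * (s / w) = s := by field_simp
  nlinarith

/-- The competitive-ratio expression `w log w / (w - (1+f))` attains its minimum over
`w > 1 + f` at the solution `wh*` of `wh = (1+f)(log wh + 1)`, with minimum value
`log wh* + 1`; for `f > 0` equality holds exactly at `w = wh*`. -/
theorem stmt_4 (f whStar : ℝ) (hf : 0 ≤ f) (hwh1 : 1 ≤ whStar)
    (hwh : whStar = (1 + f) * (Real.log whStar + 1)) :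
    (∀ w : ℝ, 1 + f < w →
      Real.log whStar + 1 ≤ (w * Real.log w) / (w - (1 + f))) ∧
    (0 < f → ∀ w : ℝ, 1 + f < w →
      ((w * Real.log w) / (w - (1 + f)) = Real.log whStar + 1 ↔ w = whStar)) := by
  have hs : (0:ℝ) < whStar := lt_of_lt_of_le one_pos hwh1
  constructor
  · intro w hw
    have hd : 0 < w - (1 + f) := by linarith
    have hwpos : 0 < w := by linarith
    rw [le_div_iff₀ hd]
    have := key_ineq whStar w hs hwpos
    nlinarith
  · intro hfpos w hw
    have hd : 0 < w - (1 + f) := by linarith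
    have hwpos : 0 < w := by linarith
    constructor
    · intro heq
      by_contra hne
      have := key_ineq_strict whStar w hs hwpos hne
      rw [div_eq_iff (ne_of_gt hd)] at heq
      nlinarith
    · intro h
      subst h
      rw [div_eq_iff (ne_of_gt hd)]
      nlinarith
end

section
/- Let λ > 1 and τ ≥ 0 be real numbers, and define Ψ(y) = τ·(λ^y − 1) and ψ(y) = τ·(log λ)·λ^y for y ∈ [0, 1]. Let 0 ≤ w' ≤ w be reals and let y : [0, ∞) → [0, 1] be a measurable function with y(t) = 1 for almost every t ∈ [0, w'] and with ∫₀^∞ Ψ(y(t)) dt finite. Then (log λ)·(w − ∫₀^∞ Ψ(y(t)) dt) + ∫_{w'}^{w} ψ(y(t)) dt ≤ (τ + 1)·(log λ)·w − τ·λ·(log λ)·w'. Moreover, if additionally τ·(λ − 1) ≥ 1 + f for some f ≥ 0 and w ≥ ∫₀^∞ Ψ(y(t)) dt, then w ≥ (1 + f)·w'. -/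
open MeasureTheory

/-- Key dual-increment computation in Step (ii) of the proof of Theorem 4.1, with the
generalized exponential penalty `Ψ(y) = τ(λ^y - 1)` and its derivative
`ψ(y) = τ (log λ) λ^y`. -/
theorem stmt_5 (lam τ f w w' : ℝ) (hlam : 1 < lam) (hτ : 0 ≤ τ)
    (hw' : 0 ≤ w') (hww' : w' ≤ w)
    (y : ℝ → ℝ) (hy_meas : Measurable y)
    (hy_mem : ∀ t : ℝ, y t ∈ Set.Icc (0 : ℝ) 1)
    (hy_one : ∀ᵐ t : ℝ, t ∈ Set.Icc (0 : ℝ) w' → y t = 1)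
    (hint : IntegrableOn (fun t => τ * (lam ^ (y t) - 1)) (Set.Ioi (0 : ℝ))) :
    (Real.log lam * (w - ∫ t in Set.Ioi (0 : ℝ), τ * (lam ^ (y t) - 1))
        + ∫ t in w'..w, τ * Real.log lam * lam ^ (y t)
      ≤ (τ + 1) * Real.log lam * w - τ * lam * Real.log lam * w') ∧
    (0 ≤ f → 1 + f ≤ τ * (lam - 1) →
      (∫ t in Set.Ioi (0 : ℝ), τ * (lam ^ (y t) - 1)) ≤ w →
      (1 + f) * w' ≤ w) := by
  set L := Real.log lam with hL
  have hL0 : 0 < L := Real.log_pos hlam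
  set g : ℝ → ℝ := fun t => τ * (lam ^ (y t) - 1) with hg
  have hlam0 : 0 < lam := lt_trans one_pos hlam
  have hg_nonneg : ∀ t, 0 ≤ g t := by
    intro t
    have h1 : (1 : ℝ) ≤ lam ^ (y t) :=
      Real.one_le_rpow hlam.le (hy_mem t).1
    have : 0 ≤ lam ^ (y t) - 1 := by linarith
    exact mul_nonneg hτ this
  -- integrability on subintervals
  have hsub1 : Set.Ioc (0:ℝ) w' ⊆ Set.Ioi (0:ℝ) := Set.Ioc_subset_Ioi_self
  have hsub2 : Set.Ioc w' w ⊆ Set.Ioi (0:ℝ) := fun x hx => lt_of_le_of_lt hw' hx.1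
  have hsub3 : Set.Ioc (0:ℝ) w ⊆ Set.Ioi (0:ℝ) := Set.Ioc_subset_Ioi_self
  have hint1 : IntegrableOn g (Set.Ioc (0:ℝ) w') := hint.mono_set hsub1
  have hint2 : IntegrableOn g (Set.Ioc w' w) := hint.mono_set hsub2
  have hii2 : IntervalIntegrable g volume w' w := by
    rw [intervalIntegrable_iff, Set.uIoc_of_le hww']; exact hint2
  -- value of the integral on Ioc 0 w'
  have h1 : ∫ t in Set.Ioc (0:ℝ) w', g t = τ * (lam - 1) * w' := by
    have hcongr : ∀ᵐ t, t ∈ Set.Ioc (0:ℝ) w' → g t = τ * (lam - 1) := by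
      filter_upwards [hy_one] with t ht hmem
      have : y t = 1 := ht ⟨hmem.1.le, hmem.2⟩
      simp [hg, this, Real.rpow_one]
    calc ∫ t in Set.Ioc (0:ℝ) w', g t
        = ∫ _ in Set.Ioc (0:ℝ) w', (τ * (lam - 1)) :=
          setIntegral_congr_ae measurableSet_Ioc hcongr
      _ = τ * (lam - 1) * w' := by
          simp [Real.volume_Ioc, ENNReal.toReal_ofReal hw', mul_comm, hw']
  -- set J and I
  set J : ℝ := ∫ t in w'..w, g t with hJ
  have hJ_Ioc : J = ∫ t in Set.Ioc w' w, g t := intervalIntegral.integral_of_le hww'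
  have hJ_nonneg : 0 ≤ J := by
    rw [hJ_Ioc]
    exact setIntegral_nonneg measurableSet_Ioc fun t _ => hg_nonneg t
  set I : ℝ := ∫ t in Set.Ioi (0:ℝ), g t with hI
  -- key inequality : τ(λ-1)w' + J ≤ I
  have hkey : τ * (lam - 1) * w' + J ≤ I := by
    have hii1 : IntervalIntegrable g volume 0 w' := by
      rw [intervalIntegrable_iff, Set.uIoc_of_le hw']; exact hint1
    have hadd := intervalIntegral.integral_add_adjacent_intervals hii1 hii2
    have e1 : ∫ t in (0:ℝ)..w', g t = τ * (lam - 1) * w' := by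
      rw [intervalIntegral.integral_of_le hw', h1]
    have e2 : ∫ t in (0:ℝ)..w, g t = ∫ t in Set.Ioc (0:ℝ) w, g t :=
      intervalIntegral.integral_of_le (hw'.trans hww')
    have hmono : ∫ t in Set.Ioc (0:ℝ) w, g t ≤ I := by
      apply setIntegral_mono_set hint
      · exact Filter.Eventually.of_forall fun t => hg_nonneg t
      · exact Filter.Eventually.of_forall hsub3
    rw [e1, e2] at hadd
    linarith [hadd, hmono]
  -- rewrite the ψ integral
  have hpsi : ∫ t in w'..w, τ * L * lam ^ (y t) = L * J + τ * L * (w - w') := by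
    have heq : ∀ t, τ * L * lam ^ (y t) = L * g t + τ * L := by
      intro t; simp [hg]; ring
    calc ∫ t in w'..w, τ * L * lam ^ (y t)
        = ∫ t in w'..w, (L * g t + τ * L) := by
          exact intervalIntegral.integral_congr fun t _ => heq t
      _ = (∫ t in w'..w, L * g t) + ∫ t in w'..w, (τ * L : ℝ) := by
          apply intervalIntegral.integral_add (hii2.const_mul L)
          exact intervalIntegrable_const
      _ = L * J + τ * L * (w - w') := by
          rw [intervalIntegral.integral_const_mul, intervalIntegral.integral_const,
            smul_eq_mul, ← hJ]
          ring
  constructor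
  · rw [hpsi]
    have h2 : -(L * I) ≤ -(L * (τ * (lam - 1) * w' + J)) := by
      have := mul_le_mul_of_nonneg_left hkey hL0.le
      linarith
    nlinarith [h2]
  · intro hf hτf hIw
    have h3 : τ * (lam - 1) * w' ≤ w := by linarith
    have h4 : (1 + f) * w' ≤ τ * (lam - 1) * w' :=
      mul_le_mul_of_nonneg_right hτf hw'
    linarith
end

section
/- Let f ≥ 1/3 be a real number and set τ = 1 + f + √(f(1 + f)). Then τ > 1 + f, and for every real w ≥ τ, ((τ + 1)·w − 2τ)/(w − (1 + f)) ≤ 1 + 2f + 2·√(f(1 + f)). -/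
/-- Corollary 5.3 (deterministic integral, large buyback cost regime): with
`τ = 1 + f + √(f(1+f))` and `f ≥ 1/3`, we have `τ > 1 + f`, and for every `w ≥ τ`,
`((τ+1)w - 2τ)/(w-(1+f)) ≤ 1 + 2f + 2√(f(1+f))`. -/
theorem stmt_9 (f τ : ℝ) (hf : 1 / 3 ≤ f)
    (hτ : τ = 1 + f + Real.sqrt (f * (1 + f))) :
    1 + f < τ ∧
    ∀ w : ℝ, τ ≤ w →
      ((τ + 1) * w - 2 * τ) / (w - (1 + f))
        ≤ 1 + 2 * f + 2 * Real.sqrt (f * (1 + f)) := by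
  set s := Real.sqrt (f * (1 + f)) with hs
  have hfpos : (0:ℝ) < f := by linarith
  have hsq : s ^ 2 = f * (1 + f) := Real.sq_sqrt (by nlinarith)
  have hspos : 0 < s := Real.sqrt_pos.mpr (by nlinarith)
  have hsge : 1 - f ≤ s := by nlinarith
  constructor
  · linarith [hτ]
  · intro w hw
    have hden : 0 < w - (1 + f) := by nlinarith [hτ]
    rw [div_le_iff₀ hden]
    nlinarith [mul_nonneg (by linarith : (0:ℝ) ≤ f - 1 + s) (by linarith [hτ] : (0:ℝ) ≤ w - τ)]
end

section
/- For each integer i ≥ 2, define pre(i) as the largest positive integer i' ≤ i such that the sum of 1/ℓ over integers ℓ with i' ≤ ℓ ≤ i is strictly greater than 1. Then pre(i)/i converges to 1/e as i → ∞. -/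
open Real Finset Filter

lemma aux_log_succ (n : ℕ) (hn : 1 ≤ n) :
    Real.log (n + 1) - Real.log n ≤ 1 / n := by
  have hn0 : (0:ℝ) < n := by exact_mod_cast hn
  have h := Real.log_le_sub_one_of_pos (x := ((n:ℝ) + 1) / n) (by positivity)
  rw [Real.log_div (by positivity) (ne_of_gt hn0)] at h
  have : ((n:ℝ) + 1) / n - 1 = 1 / n := by field_simp; ring
  linarith

lemma aux_log_pred (n : ℕ) (hn : 2 ≤ n) :
    (1:ℝ) / n ≤ Real.log n - Real.log ((n:ℝ) - 1) := by
  have hn0 : (2:ℝ) ≤ n := by exact_mod_cast hn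
  have h := Real.log_le_sub_one_of_pos (x := ((n:ℝ) - 1) / n) (by apply div_pos <;> linarith)
  rw [Real.log_div (ne_of_gt (by linarith)) (ne_of_gt (by linarith))] at h
  have : ((n:ℝ) - 1) / n - 1 = -(1 / n) := by field_simp; ring
  linarith

lemma sum_lb (a : ℕ) (ha : 1 ≤ a) : ∀ b, a ≤ b →
    Real.log (b + 1) - Real.log a ≤ ∑ ℓ ∈ Finset.Icc a b, (1:ℝ) / ℓ := by
  intro b hb
  induction b, hb using Nat.le_induction with
  | base =>
      rw [Finset.Icc_self, Finset.sum_singleton]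
      exact aux_log_succ a ha
  | succ b hb ih =>
      rw [Finset.sum_Icc_succ_top (by omega)]
      have h1 := aux_log_succ (b + 1) (by omega)
      push_cast at h1 ⊢
      linarith

lemma sum_ub (a : ℕ) (ha : 2 ≤ a) : ∀ b, a ≤ b →
    ∑ ℓ ∈ Finset.Icc a b, (1:ℝ) / ℓ ≤ Real.log b - Real.log ((a:ℝ) - 1) := by
  intro b hb
  induction b, hb using Nat.le_induction with
  | base =>
      rw [Finset.Icc_self, Finset.sum_singleton]
      exact aux_log_pred a ha
  | succ b hb ih =>
      rw [Finset.sum_Icc_succ_top (by omega)]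
      have h1 := aux_log_pred (b + 1) (by omega)
      push_cast at h1 ⊢
      rw [add_sub_cancel_right] at h1
      linarith

/-- Lemma C.4 (part): `pre(i)/i → 1/e`, where `pre(i)` is the largest `1 ≤ i' ≤ i`
with `∑_{ℓ=i'}^{i} 1/ℓ > 1`. -/
theorem stmt_10 (pre : ℕ → ℕ)
    (hpre : ∀ i : ℕ, 2 ≤ i →
      IsGreatest {i' : ℕ | 1 ≤ i' ∧ i' ≤ i ∧
        1 < ∑ ℓ ∈ Finset.Icc i' i, (1 : ℝ) / ℓ} (pre i)) :
    Filter.Tendsto (fun i : ℕ => (pre i : ℝ) / i) Filter.atTop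
      (nhds (Real.exp 1)⁻¹) := by
  set e := Real.exp 1 with he
  have he1 : (1:ℝ) < e := by
    rw [he]; calc (1:ℝ) < 2 := one_lt_two
    _ ≤ Real.exp 1 := by linarith [Real.add_one_le_exp 1]
  have he0 : (0:ℝ) < e := by linarith
  -- eventual bounds
  have hbound : ∀ i : ℕ, 2 ≤ i →
      ((i:ℝ) + 1) / e - 1 ≤ (pre i : ℝ) ∧ (pre i : ℝ) ≤ (i:ℝ) / e + 1 := by
    intro i hi
    obtain ⟨⟨hp1, hpi, hpsum⟩, hgrt⟩ := hpre i hi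
    have hi0 : (0:ℝ) < i := by positivity
    have hpilt : pre i < i := by
      rcases lt_or_eq_of_le hpi with h | h
      · exact h
      · exfalso
        rw [h, Finset.Icc_self, Finset.sum_singleton] at hpsum
        have : (1:ℝ)/i ≤ 1 := by
          rw [div_le_one hi0]; exact_mod_cast Nat.one_le_iff_ne_zero.mpr (by omega)
        linarith
    -- lower bound: sum from pre i + 1 to i is ≤ 1
    have hnot : ¬ (1 < ∑ ℓ ∈ Finset.Icc (pre i + 1) i, (1:ℝ) / ℓ) := by
      intro hc
      have := hgrt ⟨by omega, by omega, hc⟩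
      omega
    push_neg at hnot
    have hlb := sum_lb (pre i + 1) (by omega) i (by omega)
    have hlog : Real.log ((i:ℝ) + 1) ≤ 1 + Real.log ((pre i : ℝ) + 1) := by
      push_cast at hlb; linarith
    have hlow : ((i:ℝ) + 1) / e - 1 ≤ (pre i : ℝ) := by
      have h2 : ((i:ℝ) + 1) ≤ Real.exp (1 + Real.log ((pre i:ℝ) + 1)) := by
        rw [← Real.exp_log (x := (i:ℝ) + 1) (by positivity)]
        exact Real.exp_le_exp.mpr hlog
      rw [Real.exp_add, Real.exp_log (by positivity), ← he] at h2
      have h3 : ((i:ℝ) + 1) / e ≤ (pre i : ℝ) + 1 := by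
        rw [div_le_iff₀ he0]; nlinarith
      linarith
    refine ⟨hlow, ?_⟩
    -- upper bound
    rcases Nat.lt_or_ge (pre i) 2 with h2 | h2
    · have : (pre i : ℝ) ≤ 1 := by exact_mod_cast Nat.lt_succ_iff.mp h2
      have : (0:ℝ) ≤ (i:ℝ) / e := by positivity
      linarith
    · have hub := sum_ub (pre i) h2 i hpi
      have hlog2 : Real.log ((pre i : ℝ) - 1) < Real.log i - 1 := by linarith
      have h2' : (pre i : ℝ) - 1 < Real.exp (Real.log i - 1) := by
        have hp0 : (0:ℝ) < (pre i : ℝ) - 1 := by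
          have : (2:ℝ) ≤ pre i := by exact_mod_cast h2
          linarith
        rw [← Real.exp_log hp0]
        exact Real.exp_lt_exp.mpr hlog2
      rw [Real.exp_sub, Real.exp_log hi0] at h2'
      have : (i:ℝ) / Real.exp 1 = (i:ℝ) / e := by rw [he]
      linarith [h2'.le, this]
  -- squeeze
  have hlim1 : Tendsto (fun i : ℕ => e⁻¹ * (1 + 1 / (i:ℝ)) - 1 / i) atTop (nhds e⁻¹) := by
    have := ((tendsto_const_nhds (x := e⁻¹) (f := atTop)).mul
      ((tendsto_const_nhds (x := (1:ℝ))).add tendsto_one_div_atTop_nhds_zero_nat)).sub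
      tendsto_one_div_atTop_nhds_zero_nat
    simpa using this
  have hlim2 : Tendsto (fun i : ℕ => e⁻¹ + 1 / (i:ℝ)) atTop (nhds e⁻¹) := by
    have := (tendsto_const_nhds (x := e⁻¹) (f := atTop)).add
      tendsto_one_div_atTop_nhds_zero_nat
    simpa using this
  refine tendsto_of_tendsto_of_tendsto_of_le_of_le' hlim1 hlim2 ?_ ?_
  · filter_upwards [eventually_ge_atTop 2] with i hi
    have hi0 : (0:ℝ) < i := by positivity
    have h := (hbound i hi).1
    rw [← sub_nonneg]
    have key : (pre i : ℝ) / i - (e⁻¹ * (1 + 1/(i:ℝ)) - 1/i)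
        = ((pre i : ℝ) - (((i:ℝ)+1)/e - 1)) / i := by
      field_simp
    rw [key]
    apply div_nonneg (by linarith) hi0.le
  · filter_upwards [eventually_ge_atTop 2] with i hi
    have hi0 : (0:ℝ) < i := by positivity
    have h := (hbound i hi).2
    rw [div_le_iff₀ hi0]
    have : (e⁻¹ + 1/(i:ℝ)) * i = (i:ℝ)/e + 1 := by field_simp
    linarith
end

section
/- For each integer i ≥ 1, define suc(i) as the smallest integer i' ≥ i such that the sum of 1/ℓ over integers ℓ with i ≤ ℓ ≤ i' is strictly greater than 1. Then suc(i)/i converges to e as i → ∞. -/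
open Finset Real

lemma tele (f : ℕ → ℝ) {m n : ℕ} (h : m ≤ n) :
    ∑ ℓ ∈ Finset.Ico m n, (f (ℓ+1) - f ℓ) = f n - f m := by
  rw [Finset.sum_Ico_eq_sub _ h, Finset.sum_range_sub, Finset.sum_range_sub]
  ring

lemma log_diff_le (ℓ : ℕ) (hℓ : 1 ≤ ℓ) :
    Real.log (ℓ+1) - Real.log ℓ ≤ 1 / ℓ := by
  have hℓ' : (0:ℝ) < ℓ := by exact_mod_cast hℓ
  have h := Real.log_le_sub_one_of_pos (x := ((ℓ:ℝ)+1)/ℓ) (by positivity)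
  rw [Real.log_div (by positivity) (by positivity)] at h
  have : ((ℓ:ℝ)+1)/ℓ - 1 = 1/ℓ := by field_simp; ring
  linarith

lemma le_log_diff (ℓ : ℕ) (hℓ : 1 ≤ ℓ) :
    1 / ((ℓ:ℝ)+1) ≤ Real.log (ℓ+1) - Real.log ℓ := by
  have hℓ' : (0:ℝ) < ℓ := by exact_mod_cast hℓ
  have h := Real.log_le_sub_one_of_pos (x := (ℓ:ℝ)/(ℓ+1)) (by positivity)
  rw [Real.log_div (by positivity) (by positivity)] at h
  have : (ℓ:ℝ)/(ℓ+1) - 1 = -(1/(ℓ+1)) := by field_simp; ring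
  linarith

lemma sum_lower {i m : ℕ} (hi : 1 ≤ i) (him : i ≤ m) :
    Real.log (m+1) - Real.log i ≤ ∑ ℓ ∈ Finset.Icc i m, (1:ℝ) / ℓ := by
  have h := tele (fun ℓ : ℕ => Real.log ℓ) (show i ≤ m+1 by omega)
  push_cast at h
  rw [← Finset.Ico_add_one_right_eq_Icc, ← h]
  apply Finset.sum_le_sum
  intro ℓ hℓ
  simp only [Finset.mem_Ico] at hℓ
  exact log_diff_le ℓ (le_trans hi hℓ.1)

lemma sum_upper {i m : ℕ} (hi : 1 ≤ i) (him : i ≤ m) :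
    ∑ ℓ ∈ Finset.Icc i m, (1:ℝ) / ℓ ≤ 1/i + (Real.log m - Real.log i) := by
  have hsplit : Finset.Icc i m = insert i (Finset.Icc (i+1) m) := by
    rw [Finset.Icc_add_one_left_eq_Ioc]
    exact (Finset.Ioc_insert_left him).symm
  rw [hsplit, Finset.sum_insert (by simp)]
  gcongr
  have h := tele (fun ℓ : ℕ => Real.log ℓ) him
  push_cast at h
  rw [← h]
  have hmap : ∑ ℓ ∈ Finset.Icc (i+1) m, (1:ℝ)/ℓ
      = ∑ ℓ ∈ Finset.Ico i m, (1:ℝ)/(ℓ+1) := by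
    rw [← Finset.Ico_add_one_right_eq_Icc, Finset.sum_Ico_eq_sum_range, Finset.sum_Ico_eq_sum_range]
    simp only [Nat.add_sub_add_right]
    apply Finset.sum_congr rfl
    intro k _; push_cast; ring_nf
  rw [hmap]
  apply Finset.sum_le_sum
  intro ℓ hℓ
  simp only [Finset.mem_Ico] at hℓ
  exact le_log_diff ℓ (le_trans hi hℓ.1)

/-- Lemma C.4 (part): `suc(i)/i → e`, where `suc(i)` is the smallest `i' ≥ i`
with `∑_{ℓ=i}^{i'} 1/ℓ > 1`. -/
theorem stmt_11 (suc : ℕ → ℕ)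
    (hsuc : ∀ i : ℕ, 1 ≤ i →
      IsLeast {i' : ℕ | i ≤ i' ∧
        1 < ∑ ℓ ∈ Finset.Icc i i', (1 : ℝ) / ℓ} (suc i)) :
    Filter.Tendsto (fun i : ℕ => (suc i : ℝ) / i) Filter.atTop
      (nhds (Real.exp 1)) := by
  have key : ∀ i : ℕ, 1 ≤ i →
      Real.exp (1 - 1/i) ≤ (suc i : ℝ) / i ∧ (suc i : ℝ) / i ≤ Real.exp 1 := by
    intro i hi
    obtain ⟨⟨hle, hgt⟩, hmin⟩ := hsuc i hi
    have hip : (0:ℝ) < i := by exact_mod_cast hi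
    -- suc i > i
    have hgti : i < suc i := by
      rcases lt_or_eq_of_le hle with h | h
      · exact h
      · exfalso
        rw [← h, Finset.Icc_self, Finset.sum_singleton] at hgt
        have : (1:ℝ)/i ≤ 1 := by
          rw [div_le_one hip]; exact_mod_cast hi
        linarith
    have hsucp : (0:ℝ) < suc i := by
      have : 0 < suc i := by omega
      exact_mod_cast this
    constructor
    · -- lower bound: 1 < sum ≤ 1/i + log(suc i) - log i
      have h1 := sum_upper hi hle
      have h2 : 1 - 1/(i:ℝ) < Real.log (suc i) - Real.log i := by linarith
      rw [← Real.log_div (ne_of_gt hsucp) (ne_of_gt hip)] at h2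
      have := Real.exp_lt_exp.mpr h2
      rw [Real.exp_log (by positivity)] at this
      exact le_of_lt this
    · -- upper bound via minimality at suc i - 1
      have hnot : ¬ (1 < ∑ ℓ ∈ Finset.Icc i (suc i - 1), (1:ℝ)/ℓ) := by
        intro hcon
        have := hmin ⟨by omega, hcon⟩
        omega
      push_neg at hnot
      have h1 := sum_lower hi (show i ≤ suc i - 1 by omega)
      have hcast : ((suc i - 1 : ℕ) : ℝ) + 1 = (suc i : ℝ) := by
        have : suc i - 1 + 1 = suc i := by omega
        exact_mod_cast congrArg (Nat.cast : ℕ → ℝ) this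
      rw [hcast] at h1
      have h2 : Real.log (suc i) - Real.log i ≤ 1 := by linarith
      rw [← Real.log_div (ne_of_gt hsucp) (ne_of_gt hip)] at h2
      calc (suc i : ℝ)/i = Real.exp (Real.log ((suc i:ℝ)/i)) := by
            rw [Real.exp_log (by positivity)]
        _ ≤ Real.exp 1 := Real.exp_le_exp.mpr h2
  have hlo : Filter.Tendsto (fun i : ℕ => Real.exp (1 - 1/i)) Filter.atTop
      (nhds (Real.exp 1)) := by
    have : Filter.Tendsto (fun i : ℕ => 1 - 1/(i:ℝ)) Filter.atTop (nhds 1) := by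
      have h := tendsto_one_div_atTop_nhds_zero_nat (𝕜 := ℝ)
      have := h.const_sub 1
      simpa using this
    simpa [Function.comp_def] using (Real.continuous_exp.continuousAt.tendsto.comp this)
  apply tendsto_of_tendsto_of_tendsto_of_le_of_le' hlo tendsto_const_nhds
  · filter_upwards [Filter.eventually_ge_atTop 1] with i hi using (key i hi).1
  · filter_upwards [Filter.eventually_ge_atTop 1] with i hi using (key i hi).2
end

section
/- For each integer i ≥ 2, define pre(i) as the largest positive integer i' ≤ i such that Σ_{ℓ=i'}^{i} 1/ℓ > 1, and for each integer i ≥ 1, define suc(i) as the smallest integer i' ≥ i such that Σ_{ℓ=i}^{i'} 1/ℓ > 1. Then the limit superior, as i → ∞, of Σ_{i'=pre(i)+1}^{i} 1/suc(i') is at most 1/e. -/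
open Finset Real Filter

lemma aux_log3_stmt12 : 1 < Real.log 3 := by
  rw [Real.lt_log_iff_exp_lt (by norm_num : (0:ℝ) < 3)]
  have := Real.exp_one_lt_d9
  linarith

lemma aux_lower_stmt12 (a : ℕ) (ha : 1 ≤ a) : ∀ b : ℕ,
    Real.log (b + 1) - Real.log a ≤ ∑ ℓ ∈ Finset.Icc a b, (1 : ℝ) / ℓ := by
  intro b
  induction b with
  | zero =>
    rw [Finset.Icc_eq_empty (by omega)]
    simp only [Finset.sum_empty, Nat.cast_zero, zero_add, Real.log_one]
    have : (0:ℝ) ≤ Real.log a := Real.log_nonneg (by exact_mod_cast ha)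
    linarith
  | succ n ih =>
    rcases le_or_gt a (n+1) with h | h
    · rw [Finset.sum_Icc_succ_top h]
      have hn : (0:ℝ) < (n:ℝ) + 1 := by positivity
      have key : Real.log ((n:ℝ) + 1 + 1) - Real.log ((n:ℝ) + 1) ≤ 1 / ((n:ℝ) + 1) := by
        have h2 := Real.log_le_sub_one_of_pos (x := ((n:ℝ)+2)/((n:ℝ)+1)) (by positivity)
        rw [Real.log_div (by positivity) (by positivity)] at h2
        have h3 : ((n:ℝ)+2)/((n:ℝ)+1) - 1 = 1/((n:ℝ)+1) := by field_simp; norm_num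
        have e : (n:ℝ)+1+1 = (n:ℝ)+2 := by ring
        rw [e]
        linarith
      push_cast at ih ⊢
      linarith [ih]
    · rw [Finset.Icc_eq_empty (by omega)]
      simp only [Finset.sum_empty]
      have : Real.log ((n:ℝ) + 1 + 1) ≤ Real.log a := by
        apply Real.log_le_log (by positivity)
        have : (n:ℕ) + 2 ≤ a := by omega
        exact_mod_cast this
      push_cast
      linarith

lemma aux_upper_stmt12 (a : ℕ) (ha : 1 ≤ a) : ∀ b : ℕ, a ≤ b →
    ∑ ℓ ∈ Finset.Icc (a+1) b, (1 : ℝ) / ℓ ≤ Real.log b - Real.log a := by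
  intro b
  induction b with
  | zero => omega
  | succ n ih =>
    intro hab
    rcases le_or_gt a n with h | h
    · rw [Finset.sum_Icc_succ_top (by omega)]
      have key : (1:ℝ) / ((n:ℝ) + 1) ≤ Real.log ((n:ℝ)+1) - Real.log n := by
        have hn : (0:ℝ) < (n:ℝ) := by
          have : 1 ≤ n := le_trans ha h
          exact_mod_cast this
        have h2 := Real.log_le_sub_one_of_pos (x := (n:ℝ)/((n:ℝ)+1)) (by positivity)
        rw [Real.log_div (by positivity) (by positivity)] at h2
        have : (n:ℝ)/((n:ℝ)+1) - 1 = -(1/((n:ℝ)+1)) := by field_simp; ring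
        linarith
      have ih' := ih h
      push_cast at ih' ⊢
      linarith
    · have : a = n + 1 := by omega
      subst this
      rw [Finset.Icc_eq_empty (by omega)]
      simp

/-- Lemma C.4 (part): `limsup_{i → ∞} ∑_{i'=pre(i)+1}^{i} 1/suc(i') ≤ 1/e`. -/
theorem stmt_12 (pre suc : ℕ → ℕ)
    (hpre : ∀ i : ℕ, 2 ≤ i →
      IsGreatest {i' : ℕ | 1 ≤ i' ∧ i' ≤ i ∧
        1 < ∑ ℓ ∈ Finset.Icc i' i, (1 : ℝ) / ℓ} (pre i))
    (hsuc : ∀ i : ℕ, 1 ≤ i →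
      IsLeast {i' : ℕ | i ≤ i' ∧
        1 < ∑ ℓ ∈ Finset.Icc i i', (1 : ℝ) / ℓ} (suc i)) :
    Filter.limsup
      (fun i : ℕ => ∑ i' ∈ Finset.Icc (pre i + 1) i, (1 : ℝ) / (suc i'))
      Filter.atTop ≤ (Real.exp 1)⁻¹ := by
  -- lower bound on `suc`
  have hsuc_lb : ∀ j : ℕ, 1 ≤ j → (j:ℝ) * Real.exp (1 - 1/(j:ℝ)) < (suc j : ℝ) := by
    intro j hj
    obtain ⟨⟨hle, hsum⟩, -⟩ := hsuc j hj
    have hj0 : (0:ℝ) < (j:ℝ) := by exact_mod_cast hj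
    have hsplit : ∑ ℓ ∈ Finset.Icc j (suc j), (1:ℝ)/ℓ
        = 1/(j:ℝ) + ∑ ℓ ∈ Finset.Icc (j+1) (suc j), (1:ℝ)/ℓ := by
      rw [Finset.Icc_add_one_left_eq_Ioc, ← Finset.Ioc_insert_left hle, Finset.sum_insert (by simp)]
    have hup := aux_upper_stmt12 j hj (suc j) hle
    have hs0 : (0:ℝ) < (suc j : ℝ) := by
      exact_mod_cast lt_of_lt_of_le hj (by exact_mod_cast hle)
    have hkey : Real.log (j:ℝ) + (1 - 1/(j:ℝ)) < Real.log (suc j : ℝ) := by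
      rw [hsplit] at hsum
      linarith
    have := Real.exp_lt_exp.2 hkey
    rwa [Real.exp_add, Real.exp_log hj0, Real.exp_log hs0] at this
  -- `pre` tends to infinity
  have hpre_t : Tendsto (fun i => pre i) atTop atTop := by
    rw [tendsto_atTop]
    intro m
    filter_upwards [eventually_ge_atTop (3*m+3)] with i hi
    rcases Nat.eq_zero_or_pos m with rfl | hm
    · exact Nat.zero_le _
    apply (hpre i (by omega)).2
    refine ⟨hm, by omega, ?_⟩
    have hlow := aux_lower_stmt12 m hm i
    have hm0 : (0:ℝ) < (m:ℝ) := by exact_mod_cast hm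
    have h3m : (3:ℝ) * m ≤ (i:ℝ) + 1 := by
      have : 3*m ≤ i + 1 := by omega
      exact_mod_cast this
    have hlog : Real.log ((3:ℝ)*m) ≤ Real.log ((i:ℝ)+1) := Real.log_le_log (by positivity) h3m
    rw [Real.log_mul (by norm_num) (ne_of_gt hm0)] at hlog
    have := aux_log3_stmt12
    linarith
  have hpre1 : ∀ i : ℕ, 2 ≤ i → 1 ≤ pre i := fun i hi => ((hpre i hi).1).1
  -- the tail harmonic sum is at most 1
  have hps : ∀ i : ℕ, 2 ≤ i → ∑ ℓ ∈ Finset.Icc (pre i + 1) i, (1:ℝ)/ℓ ≤ 1 := by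
    intro i hi
    by_contra hlt
    push_neg at hlt
    rcases le_or_gt (pre i + 1) i with h | h
    · have := (hpre i hi).2 ⟨by omega, h, hlt⟩
      omega
    · rw [Finset.Icc_eq_empty (by omega)] at hlt
      simp at hlt
      linarith
  -- main estimate
  set f : ℕ → ℝ := fun i => ∑ i' ∈ Finset.Icc (pre i + 1) i, (1 : ℝ) / (suc i') with hf
  set g : ℕ → ℝ := fun i => (Real.exp 1)⁻¹ * Real.exp (1/((pre i : ℝ)+1)) with hg
  have hfg : ∀ᶠ i in atTop, f i ≤ g i := by
    filter_upwards [eventually_ge_atTop 2] with i hi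
    have hp1 : 1 ≤ pre i := hpre1 i hi
    have hc : (0:ℝ) < (pre i : ℝ) + 1 := by positivity
    calc f i ≤ ∑ i' ∈ Finset.Icc (pre i + 1) i,
          (Real.exp 1)⁻¹ * Real.exp (1/((pre i : ℝ)+1)) * (1/(i':ℝ)) := by
          apply Finset.sum_le_sum
          intro i' hi'
          rw [Finset.mem_Icc] at hi'
          have hi1 : (1:ℕ) ≤ i' := by omega
          have hi0 : (0:ℝ) < (i':ℝ) := by exact_mod_cast hi1
          have hlb := hsuc_lb i' hi1
          have hpos : (0:ℝ) < (i':ℝ) * Real.exp (1 - 1/(i':ℝ)) := by positivity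
          have h1 : (1:ℝ) / (suc i' : ℝ) ≤ 1 / ((i':ℝ) * Real.exp (1 - 1/(i':ℝ))) :=
            one_div_le_one_div_of_le hpos hlb.le
          have h2 : (1:ℝ) / ((i':ℝ) * Real.exp (1 - 1/(i':ℝ)))
              = (Real.exp 1)⁻¹ * Real.exp (1/(i':ℝ)) * (1/(i':ℝ)) := by
            rw [Real.exp_sub]
            field_simp
          have h3 : Real.exp (1/(i':ℝ)) ≤ Real.exp (1/((pre i : ℝ)+1)) := by
            apply Real.exp_le_exp.2
            apply one_div_le_one_div_of_le hc
            exact_mod_cast hi'.1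
          have h4 : (Real.exp 1)⁻¹ * Real.exp (1/(i':ℝ)) * (1/(i':ℝ))
              ≤ (Real.exp 1)⁻¹ * Real.exp (1/((pre i : ℝ)+1)) * (1/(i':ℝ)) := by
            apply mul_le_mul_of_nonneg_right _ (by positivity)
            exact mul_le_mul_of_nonneg_left h3 (by positivity)
          calc (1:ℝ) / (suc i' : ℝ) ≤ _ := h1
            _ = _ := h2
            _ ≤ _ := h4
      _ = (Real.exp 1)⁻¹ * Real.exp (1/((pre i : ℝ)+1))
            * ∑ i' ∈ Finset.Icc (pre i + 1) i, (1/(i':ℝ)) := by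
          rw [Finset.mul_sum]
      _ ≤ (Real.exp 1)⁻¹ * Real.exp (1/((pre i : ℝ)+1)) * 1 := by
          apply mul_le_mul_of_nonneg_left (hps i hi) (by positivity)
      _ = g i := by rw [mul_one]
  have hgt : Tendsto g atTop (nhds ((Real.exp 1)⁻¹)) := by
    have h1 : Tendsto (fun i => (pre i : ℝ) + 1) atTop atTop :=
      tendsto_atTop_add_const_right _ 1 (tendsto_natCast_atTop_atTop.comp hpre_t)
    have h2 : Tendsto (fun i => 1/((pre i : ℝ) + 1)) atTop (nhds 0) := by
      simpa only [one_div, Pi.inv_def] using h1.inv_tendsto_atTop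
    have h3 : Tendsto (fun i => Real.exp (1/((pre i : ℝ)+1))) atTop (nhds 1) := by
      have := (Real.continuous_exp.tendsto 0).comp h2
      simpa [Function.comp_def] using this
    have := h3.const_mul ((Real.exp 1)⁻¹)
    simpa [hg, one_div] using this
  have hb : IsBoundedUnder (· ≥ ·) atTop f :=
    Filter.isBoundedUnder_of ⟨0, fun i => by
      simp only [hf, ge_iff_le]
      apply Finset.sum_nonneg
      intro j _
      positivity⟩
  calc Filter.limsup f atTop ≤ Filter.limsup g atTop :=
        Filter.limsup_le_limsup hfg hb.isCoboundedUnder_flip hgt.isBoundedUnder_le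
    _ = (Real.exp 1)⁻¹ := hgt.limsup_eq
end

section
/- Let K ≥ 1 be an integer and let π be a permutation of {1, …, K}. For i, j ∈ {1, …, K} define edge weights w_{ij} = 1/(K − i + 1) if π(j) ≥ i, and w_{ij} = 0 otherwise. Then the maximum of Σ_{i=1}^{K} w_{i,σ(i)} over all permutations σ of {1, …, K} equals Σ_{ℓ=1}^{K} 1/ℓ, and it is attained at σ = π^{-1}. -/
lemma harm_aux (K : ℕ) :
    ∑ i : Fin K, (1 : ℝ) / ((K : ℝ) - (i : ℕ)) = ∑ ℓ ∈ Finset.Icc 1 K, (1 : ℝ) / ℓ := by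
  rw [Fin.sum_univ_eq_sum_range (fun i => (1 : ℝ) / ((K : ℝ) - i))]
  refine Finset.sum_nbij' (fun i => K - i) (fun ℓ => K - ℓ) ?_ ?_ ?_ ?_ ?_
  · intro a ha
    simp only [Finset.mem_range] at ha
    simp only [Finset.mem_Icc]
    omega
  · intro a ha
    simp only [Finset.mem_Icc] at ha
    simp only [Finset.mem_range]
    omega
  · intro a ha
    simp only [Finset.mem_range] at ha
    show K - (K - a) = a; omega
  · intro a ha
    simp only [Finset.mem_Icc] at ha
    show K - (K - a) = a; omega
  · intro a ha
    simp only [Finset.mem_range] at ha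
    rw [Nat.cast_sub (le_of_lt ha)]

/-- Lemma C.1: in the lower-bound instance with weights `w_{ij} = 1/(K-i+1)` when
`π(j) ≥ i` and `0` otherwise (indices in `{1,…,K}`, encoded via `Fin K`, so online node
`i : Fin K` stands for `i+1` and `1/(K-i+1)` becomes `1/(K - i.val)`), the maximum
weight of a perfect matching equals the harmonic number `∑_{ℓ=1}^{K} 1/ℓ` and is
attained at `σ = π⁻¹`. -/
theorem stmt_13 (K : ℕ) (hK : 1 ≤ K) (π : Equiv.Perm (Fin K)) :
    (∀ σ : Equiv.Perm (Fin K),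
      ∑ i : Fin K, (if i ≤ π (σ i) then (1 : ℝ) / ((K : ℝ) - (i : ℕ)) else 0)
        ≤ ∑ ℓ ∈ Finset.Icc 1 K, (1 : ℝ) / ℓ) ∧
    ∑ i : Fin K, (if i ≤ π (π.symm i) then (1 : ℝ) / ((K : ℝ) - (i : ℕ)) else 0)
      = ∑ ℓ ∈ Finset.Icc 1 K, (1 : ℝ) / ℓ := by
  constructor
  · intro σ
    rw [← harm_aux K]
    apply Finset.sum_le_sum
    intro i _
    have hpos : (0 : ℝ) < (K : ℝ) - (i : ℕ) := by
      have := i.isLt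
      have : ((i : ℕ) : ℝ) < (K : ℝ) := by exact_mod_cast this
      linarith
    split
    · exact le_rfl
    · positivity
  · rw [← harm_aux K]
    apply Finset.sum_congr rfl
    intro i _
    rw [Equiv.apply_symm_apply]
    simp
end

section
/- Let f > 0 and let Γ be a real number with 1 < Γ < 1 + 2f + 2·√(f(1 + f)). Then every sequence z : ℕ → ℝ with z(0) > 0 satisfying the recurrence z(n + 2) = (Γ + 1)·z(n + 1) − Γ·(1 + f)·z(n) for all n ≥ 0 has some term z(n) < 0. In particular, there exists no such sequence all of whose terms are nonnegative. -/
/-- Core of Theorem E.2: for `f > 0` and `1 < Γ < 1 + 2f + 2√(f(1+f))`, every real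
sequence with `z 0 > 0` satisfying `z(n+2) = (Γ+1)z(n+1) - Γ(1+f)z(n)` has a negative
term; in particular no such sequence is everywhere nonnegative. -/
theorem stmt_15 (f Γ : ℝ) (hf : 0 < f) (hΓ1 : 1 < Γ)
    (hΓ2 : Γ < 1 + 2 * f + 2 * Real.sqrt (f * (1 + f))) :
    (∀ z : ℕ → ℝ, 0 < z 0 →
      (∀ n : ℕ, z (n + 2) = (Γ + 1) * z (n + 1) - Γ * (1 + f) * z n) →
      ∃ n : ℕ, z n < 0) ∧
    ¬ ∃ z : ℕ → ℝ, 0 < z 0 ∧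
      (∀ n : ℕ, z (n + 2) = (Γ + 1) * z (n + 1) - Γ * (1 + f) * z n) ∧
      (∀ n : ℕ, 0 ≤ z n) := by
  have hs0 : (0:ℝ) ≤ Real.sqrt (f * (1 + f)) := Real.sqrt_nonneg _
  have hs : Real.sqrt (f * (1 + f)) ^ 2 = f * (1 + f) := by
    rw [sq]
    exact Real.mul_self_sqrt (by positivity)
  -- discriminant is negative
  have hdisc : (Γ + 1) ^ 2 < 4 * (Γ * (1 + f)) := by
    set s := Real.sqrt (f * (1 + f))
    have hsf : f < s := by nlinarith
    have h1 : Γ - (1 + 2 * f) < 2 * s := by linarith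
    have h2 : -(2 * s) < Γ - (1 + 2 * f) := by nlinarith
    nlinarith [mul_pos (by linarith : (0:ℝ) < 2 * s - (Γ - (1 + 2 * f)))
      (by linarith : (0:ℝ) < 2 * s + (Γ - (1 + 2 * f)))]
  set c : ℝ := Γ * (1 + f) with hc
  set δ : ℝ := c - (Γ + 1) ^ 2 / 4 with hδ
  clear_value c δ
  have hδpos : 0 < δ := by rw [hδ]; linarith
  have quad : ∀ t : ℝ, δ ≤ t ^ 2 - (Γ + 1) * t + c := by
    intro t; nlinarith [sq_nonneg (2 * t - (Γ + 1)), hδ]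
  have main : ∀ z : ℕ → ℝ, 0 < z 0 →
      (∀ n : ℕ, z (n + 2) = (Γ + 1) * z (n + 1) - Γ * (1 + f) * z n) →
      ∃ n : ℕ, z n < 0 := by
    intro z hz0 hrec
    by_contra hcon
    push_neg at hcon
    have step : ∀ n, 0 < z n → 0 < z (n + 1) := by
      intro n hn
      rcases lt_or_eq_of_le (hcon (n + 1)) with h1 | h1
      · exact h1
      · exfalso
        have h2 := hrec n
        rw [← h1] at h2
        have : z (n + 2) < 0 := by rw [h2]; nlinarith
        linarith [hcon (n + 2)]
    have pos : ∀ n, 0 < z n := fun n => Nat.rec hz0 (fun n ih => step n ih) n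
    set t : ℕ → ℝ := fun n => z (n + 1) / z n with ht
    have tpos : ∀ n, 0 < t n := fun n => div_pos (pos (n + 1)) (pos n)
    have trec : ∀ n, t (n + 1) * t n = (Γ + 1) * t n - c := by
      intro n
      have h1 := (pos n).ne'
      have h2 := (pos (n + 1)).ne'
      simp only [ht]
      field_simp
      nlinarith [hrec n, pos n, hc]
    set d : ℝ := δ / t 0 with hd
    have hdpos : 0 < d := div_pos hδpos (tpos 0)
    have hdt : d * t 0 = δ := div_mul_cancel₀ δ (tpos 0).ne'
    have bound : ∀ n : ℕ, t n ≤ t 0 - n * d := by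
      intro n
      induction n with
      | zero => simp
      | succ n ih =>
        have htn := tpos n
        have htn1 := tpos (n + 1)
        have hle : t n ≤ t 0 := by
          have : (0:ℝ) ≤ n * d := by positivity
          linarith
        have hq := quad (t n)
        have hr := trec n
        have key : (t n - t (n + 1)) * t n ≥ δ := by nlinarith
        have : t (n + 1) ≤ t n - d := by nlinarith [mul_le_mul_of_nonneg_left hle hdpos.le]
        push_cast
        linarith
    obtain ⟨N, hN⟩ := exists_nat_gt (t 0 / d)
    have : t 0 < N * d := by
      rw [div_lt_iff₀ hdpos] at hN; linarith
    have := bound N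
    linarith [tpos N]
  rw [hc]
  refine ⟨main, ?_⟩
  rintro ⟨z, h0, hrec, hnn⟩
  obtain ⟨n, hn⟩ := main z h0 hrec
  linarith [hnn n]
end

section
/- Let f be a real number with 0 ≤ f < 1/3 and let Γ be a real number with 1 + 2f + 2·√(f(1 + f)) < Γ < 2/(1 − f). Define the sequence z : ℕ → ℝ by z(0) = 1, z(1) = Γ − 1, and z(n + 2) = (Γ + 1)·z(n + 1) − Γ·(1 + f)·z(n) for all n ≥ 0. Then there exists n with z(n) < 0. -/
/-- Core of Theorem E.4: for `0 ≤ f < 1/3` and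
`1 + 2f + 2√(f(1+f)) < Γ < 2/(1-f)`, the sequence with `z 0 = 1`, `z 1 = Γ - 1` and
`z(n+2) = (Γ+1)z(n+1) - Γ(1+f)z(n)` has a negative term. -/
theorem stmt_16 (f Γ : ℝ) (hf0 : 0 ≤ f) (hf1 : f < 1 / 3)
    (hΓ1 : 1 + 2 * f + 2 * Real.sqrt (f * (1 + f)) < Γ) (hΓ2 : Γ < 2 / (1 - f))
    (z : ℕ → ℝ) (hz0 : z 0 = 1) (hz1 : z 1 = Γ - 1)
    (hrec : ∀ n : ℕ, z (n + 2) = (Γ + 1) * z (n + 1) - Γ * (1 + f) * z n) :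
    ∃ n : ℕ, z n < 0 := by
  by_contra hcon
  push_neg at hcon
  have hf1' : (0:ℝ) < 1 - f := by linarith
  have hΓ3 : Γ * (1 - f) < 2 := (lt_div_iff₀ hf1').mp hΓ2
  have htnn : 0 ≤ Real.sqrt (f * (1 + f)) := Real.sqrt_nonneg _
  have htsq : Real.sqrt (f * (1 + f)) ^ 2 = f * (1 + f) := by
    rw [Real.sq_sqrt]; nlinarith
  have hΓgt : 1 + 2 * f < Γ := by linarith
  have hΓpos : (0:ℝ) < Γ := by linarith
  have hΓ3' : Γ < 3 := by nlinarith
  have hD : 0 < Γ ^ 2 - 2 * Γ * (1 + 2 * f) + 1 := by nlinarith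
  set s := Real.sqrt (Γ ^ 2 - 2 * Γ * (1 + 2 * f) + 1) with hs
  have hs2 : s ^ 2 = Γ ^ 2 - 2 * Γ * (1 + 2 * f) + 1 := Real.sq_sqrt hD.le
  have hs0 : 0 < s := Real.sqrt_pos.mpr hD
  set r₁ : ℝ := (Γ + 1 + s) / 2 with hr1
  set r₂ : ℝ := (Γ + 1 - s) / 2 with hr2
  have hsum : r₁ + r₂ = Γ + 1 := by rw [hr1, hr2]; ring
  have hprod : r₁ * r₂ = Γ * (1 + f) := by
    rw [hr1, hr2]; nlinarith [hs2]
  have hr2pos : 0 < r₂ := by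
    rw [hr2]; nlinarith [hs2, hs0]
  have hr1pos : 0 < r₁ := by rw [hr1]; linarith
  have hr12 : r₂ < r₁ := by rw [hr1, hr2]; linarith
  have hc : Γ - 1 - r₂ < 0 := by
    rw [hr2]; nlinarith [hs2, hs0]
  -- key identity
  have key : ∀ n : ℕ, z (n + 1) - r₂ * z n = r₁ ^ n * (Γ - 1 - r₂) := by
    intro n
    induction n with
    | zero => simp [hz0, hz1]
    | succ n ih =>
      have h := hrec n
      calc z (n + 1 + 1) - r₂ * z (n + 1)
          = (Γ + 1) * z (n + 1) - Γ * (1 + f) * z n - r₂ * z (n + 1) := by rw [h]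
        _ = r₁ * (z (n + 1) - r₂ * z n) := by
            rw [← hsum, ← hprod]; ring
        _ = r₁ ^ (n + 1) * (Γ - 1 - r₂) := by rw [ih]; ring
  have hmono : ∀ n : ℕ, z (n + 1) ≤ r₂ * z n := by
    intro n
    have h := key n
    have hn : r₁ ^ n * (Γ - 1 - r₂) < 0 :=
      mul_neg_of_pos_of_neg (pow_pos hr1pos n) hc
    linarith
  have hbound : ∀ n : ℕ, z n ≤ r₂ ^ n := by
    intro n
    induction n with
    | zero => simp [hz0]
    | succ n ih =>
      calc z (n + 1) ≤ r₂ * z n := hmono n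
        _ ≤ r₂ * r₂ ^ n := mul_le_mul_of_nonneg_left ih hr2pos.le
        _ = r₂ ^ (n + 1) := by ring
  -- derive c ≤ r₂ * q^n
  set c : ℝ := r₂ - (Γ - 1) with hcdef
  have hcpos : 0 < c := by rw [hcdef]; linarith
  set q : ℝ := r₂ / r₁ with hq
  have hq0 : 0 ≤ q := le_of_lt (div_pos hr2pos hr1pos)
  have hq1 : q < 1 := (div_lt_one hr1pos).mpr hr12
  have hkey2 : ∀ n : ℕ, c ≤ r₂ * q ^ n := by
    intro n
    have h1 := key n
    have h2 := hbound n
    have h3 := hcon (n + 1)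
    have hr1n : 0 < r₁ ^ n := pow_pos hr1pos n
    -- z(n+1) = r₂ z n + r₁^n (Γ-1-r₂) ≤ r₂^{n+1} - c r₁^n, and 0 ≤ z(n+1)
    have h2' : r₂ * z n ≤ r₂ * r₂ ^ n := mul_le_mul_of_nonneg_left h2 hr2pos.le
    have h4 : c * r₁ ^ n ≤ r₂ ^ (n + 1) := by
      have hcc : r₁ ^ n * (Γ - 1 - r₂) = -(c * r₁ ^ n) := by rw [hcdef]; ring
      have hp : r₂ ^ (n + 1) = r₂ * r₂ ^ n := by ring
      rw [hp]
      linarith [h1, hcc, h3, h2']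
    have h5 : r₂ * q ^ n = r₂ ^ (n + 1) / r₁ ^ n := by
      rw [hq, div_pow]
      field_simp
      ring
    rw [h5, le_div_iff₀ hr1n]
    linarith
  have hlim : Filter.Tendsto (fun n : ℕ => r₂ * q ^ n) Filter.atTop (nhds 0) := by
    have := tendsto_pow_atTop_nhds_zero_of_lt_one hq0 hq1
    have h := this.const_mul r₂
    simpa using h
  have := hlim.eventually (eventually_lt_nhds hcpos)
  obtain ⟨n, hn⟩ := this.exists
  exact absurd (hkey2 n) (not_le.mpr hn)
end
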